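/- Let A be an integer m×n matrix with entries bounded in absolute value by Δ. If the kernel of A contains a nonzero integer vector, then it contains a nonzero integer vector d with ‖d‖_∞ ≤ (m+2)·(m·Δ)^m. -/

import Mathlib

open Finset Submodule Module Matrix

private lemma succ_pow_aux : ∀ m : ℕ, (m + 2) ^ m ≤ (m + 1) ^ (m + 1) := by
  intro m
  induction m with
  | zero => norm_num
  | succ k ih =>
    have hpos : 0 < (k + 1) ^ (k + 1) := Nat.pow_pos (by omega)
    apply Nat.le_of_mul_le_mul_right (a := (k + 3) ^ (k + 1)) (b := (k + 2) ^ (k + 2)) ?_ hpos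
    calc (k + 3) ^ (k + 1) * (k + 1) ^ (k + 1) = ((k + 3) * (k + 1)) ^ (k + 1) := by
          rw [mul_pow]
      _ ≤ ((k + 2) * (k + 2)) ^ (k + 1) := Nat.pow_le_pow_left (by nlinarith) _
      _ = (k + 2) ^ (k + 2) * (k + 2) ^ k := by
          rw [mul_pow, ← pow_add, ← pow_add]; congr 1; omega
      _ ≤ (k + 2) ^ (k + 2) * (k + 1) ^ (k + 1) := Nat.mul_le_mul le_rfl ih

private lemma bound_aux (r m Δ : ℕ) (hΔ : 1 ≤ Δ) (hr : r ≤ m) :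
    ((r + 1) * Δ) ^ r ≤ (m + 2) * (m * Δ) ^ m := by
  rcases eq_or_lt_of_le hr with rfl | h
  · have h1 : (r + 1) ^ r ≤ (r + 2) * r ^ r := by
      cases r with
      | zero => norm_num
      | succ k =>
        have h2 := succ_pow_aux k
        calc (k + 2) ^ (k + 1) = (k + 2) ^ k * (k + 2) := pow_succ _ _
          _ ≤ (k + 1) ^ (k + 1) * (k + 2) := Nat.mul_le_mul h2 le_rfl
          _ = (k + 2) * (k + 1) ^ (k + 1) := mul_comm _ _
          _ ≤ (k + 1 + 2) * (k + 1) ^ (k + 1) := Nat.mul_le_mul (by omega) le_rfl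
    calc ((r + 1) * Δ) ^ r = (r + 1) ^ r * Δ ^ r := mul_pow _ _ _
      _ ≤ ((r + 2) * r ^ r) * Δ ^ r := Nat.mul_le_mul h1 le_rfl
      _ = (r + 2) * (r * Δ) ^ r := by rw [mul_pow]; ring
  · have hm1 : 1 ≤ m := by omega
    have h1 : ((r + 1) * Δ) ^ r ≤ (m * Δ) ^ r :=
      Nat.pow_le_pow_left (Nat.mul_le_mul (by omega) le_rfl) _
    have h2 : (m * Δ) ^ r ≤ (m * Δ) ^ m :=
      Nat.pow_le_pow_right (by positivity) hr
    calc ((r + 1) * Δ) ^ r ≤ (m * Δ) ^ m := le_trans h1 h2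
      _ ≤ (m + 2) * (m * Δ) ^ m := Nat.le_mul_of_pos_left _ (by omega)

/-- If the kernel of an integer matrix `A` with entries bounded by `Δ ≥ 1` contains a
nonzero integer vector, it contains one with sup-norm at most `(m+2) * (m*Δ)^m`. -/
theorem small_norm_kernel_vector (m n : ℕ) (Δ : ℕ) (hΔ1 : 1 ≤ Δ)
    (A : Matrix (Fin m) (Fin n) ℤ)
    (hΔ : ∀ i j, |A i j| ≤ (Δ : ℤ))
    (hker : ∃ x : Fin n → ℤ, x ≠ 0 ∧ A.mulVec x = 0) :
    ∃ d : Fin n → ℤ, d ≠ 0 ∧ A.mulVec d = 0 ∧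
      ∀ j, |d j| ≤ ((m + 2) * (m * Δ) ^ m : ℕ) := by
  classical
  obtain ⟨x₀, hx₀ne, hx₀ker⟩ := hker
  obtain ⟨j₀, hj₀⟩ : ∃ j, x₀ j ≠ 0 := by
    by_contra h; push_neg at h; exact hx₀ne (funext h)
  -- rows of A over ℚ
  set rows : Fin m → (Fin n → ℚ) := fun i j => (A i j : ℚ) with hrows
  set W : Submodule ℚ (Fin n → ℚ) := Submodule.span ℚ (Set.range rows) with hWdef
  -- dot product linear functional
  let φ : (Fin n → ℚ) → (Fin n → ℚ) →ₗ[ℚ] ℚ := fun y =>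
    { toFun := fun v => v ⬝ᵥ y
      map_add' := fun a b => add_dotProduct a b y
      map_smul' := fun c a => by simp [smul_dotProduct, smul_eq_mul] }
  have cast_mulVec : ∀ (x : Fin n → ℤ) (i : Fin m),
      rows i ⬝ᵥ (fun j => (x j : ℚ)) = ((A.mulVec x i : ℤ) : ℚ) := by
    intro x i
    simp only [Matrix.mulVec, dotProduct, hrows]
    push_cast
    rfl
  -- W is a proper subspace
  have hWne : W ≠ ⊤ := by
    intro htop
    have hle : W ≤ LinearMap.ker (φ fun j => (x₀ j : ℚ)) := by
      rw [hWdef, Submodule.span_le]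
      rintro v ⟨i, rfl⟩
      simp only [SetLike.mem_coe, LinearMap.mem_ker]
      show rows i ⬝ᵥ (fun j => (x₀ j : ℚ)) = 0
      rw [cast_mulVec, hx₀ker]
      simp
    have h1 : Pi.single j₀ (1 : ℚ) ∈ W := htop ▸ Submodule.mem_top
    have h2 : (φ fun j => (x₀ j : ℚ)) (Pi.single j₀ 1) = 0 := hle h1
    have h3 : (φ fun j => (x₀ j : ℚ)) (Pi.single j₀ 1) = ((x₀ j₀ : ℤ) : ℚ) := by
      show Pi.single j₀ (1 : ℚ) ⬝ᵥ _ = _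
      rw [single_dotProduct, one_mul]
    rw [h3] at h2
    exact hj₀ (by exact_mod_cast h2)
  have hfr : finrank ℚ W < n := by
    have := Submodule.finrank_lt (K := ℚ) (V := Fin n → ℚ) hWne
    rwa [Module.finrank_pi, Fintype.card_fin] at this
  -- a linearly independent spanning subset of the rows
  obtain ⟨b, hbsub, hbspan, hbind⟩ := exists_linearIndependent ℚ (Set.range rows)
  have hbfin : b.Finite := hbind.setFinite
  haveI : Fintype b := hbfin.fintype
  have hbcard : b.toFinset.card = finrank ℚ W := by
    rw [hWdef, ← hbspan]
    exact (finrank_span_set_eq_card hbind).symm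
  -- row index set
  let R : Finset (Fin m) := b.toFinset.attach.image
      (fun v => (hbsub (Set.mem_toFinset.mp v.2)).choose)
  have hRcard : R.card ≤ finrank ℚ W := by
    calc R.card ≤ b.toFinset.attach.card := Finset.card_image_le
      _ = b.toFinset.card := Finset.card_attach
      _ = finrank ℚ W := hbcard
  have hRm : R.card ≤ m := le_trans (Finset.card_le_univ R) (by simp)
  have hRn : R.card < n := lt_of_le_of_lt hRcard hfr
  -- key property: vanishing on rows in R implies in the kernel
  have hkey : ∀ x : Fin n → ℤ, (∀ i ∈ R, A.mulVec x i = 0) → A.mulVec x = 0 := by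
    intro x hx
    have hle : W ≤ LinearMap.ker (φ fun j => (x j : ℚ)) := by
      rw [hWdef, ← hbspan, Submodule.span_le]
      intro v hv
      have hchoose := (hbsub hv).choose_spec
      have hmemR : (hbsub hv).choose ∈ R := by
        apply Finset.mem_image.mpr
        exact ⟨⟨v, Set.mem_toFinset.mpr hv⟩, Finset.mem_attach _ _, rfl⟩
      simp only [SetLike.mem_coe, LinearMap.mem_ker]
      show v ⬝ᵥ (fun j => (x j : ℚ)) = 0
      rw [← hchoose, cast_mulVec, hx _ hmemR]
      simp
    funext i
    have h1 : rows i ∈ W := hWdef ▸ Submodule.subset_span (Set.mem_range_self i)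
    have h2 : rows i ⬝ᵥ (fun j => (x j : ℚ)) = 0 := hle h1
    rw [cast_mulVec] at h2
    exact_mod_cast h2
  -- pigeonhole setup
  clear_value R
  set r : ℕ := R.card with hrdef
  clear_value r
  set B : ℕ := ((r + 1) * Δ) ^ r with hBdef
  clear_value B
  have hB1 : 1 ≤ B := by rw [hBdef]; exact Nat.one_le_pow _ _ (by positivity)
  obtain ⟨S, -, hScard⟩ := Finset.exists_subset_card_eq
    (show r + 1 ≤ (Finset.univ : Finset (Fin n)).card by
      rw [Finset.card_univ, Fintype.card_fin]; omega)
  set L : Fin m → ℤ := fun i => ∑ j ∈ S, (B : ℤ) * min (A i j) 0 with hLdef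
  clear_value L
  set U : Fin m → ℤ := fun i => ∑ j ∈ S, (B : ℤ) * max (A i j) 0 with hUdef
  clear_value U
  set D : Finset (Fin n → ℤ) :=
    Fintype.piFinset (fun j => if j ∈ S then Finset.Icc (0 : ℤ) B else {0}) with hDdef
  set T : Finset (Fin m → ℤ) :=
    Fintype.piFinset (fun i => if i ∈ R then Finset.Icc (L i) (U i) else ({0} : Finset ℤ))
    with hTdef
  clear_value D T
  have hDcard : D.card = (B + 1) ^ (r + 1) := by
    rw [hDdef, Fintype.card_piFinset]
    have : ∀ j : Fin n, ((if j ∈ S then Finset.Icc (0 : ℤ) (B : ℤ) else {0}).card)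
        = if j ∈ S then B + 1 else 1 := by
      intro j
      split
      · rw [Int.card_Icc]; omega
      · simp
    rw [Finset.prod_congr rfl (fun j _ => this j), Finset.prod_ite_mem,
      Finset.univ_inter, Finset.prod_const, hScard]
  have hTcard : T.card < D.card := by
    have hstep : ∀ i ∈ R, ((Finset.Icc (L i) (U i)).card) ≤ (r + 1) * Δ * B + 1 := by
      intro i _
      rw [Int.card_Icc]
      have hUL : U i - L i ≤ ((r + 1) * Δ * B : ℕ) := by
        rw [hUdef, hLdef]
        simp only
        rw [← Finset.sum_sub_distrib]
        have : ∀ j ∈ S, (B : ℤ) * max (A i j) 0 - (B : ℤ) * min (A i j) 0 ≤ (Δ * B : ℕ) := by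
          intro j _
          have habs : max (A i j) 0 - min (A i j) 0 = |A i j| := by
            rcases le_or_gt (A i j) 0 with h | h
            · rw [max_eq_right h, min_eq_left h, abs_of_nonpos h]; ring
            · rw [max_eq_left h.le, min_eq_right h.le, abs_of_pos h]; ring
          have : (B : ℤ) * max (A i j) 0 - (B : ℤ) * min (A i j) 0 = (B : ℤ) * |A i j| := by
            rw [← habs]; ring
          rw [this]
          push_cast
          calc (B : ℤ) * |A i j| ≤ (B : ℤ) * Δ := by
                apply mul_le_mul_of_nonneg_left (hΔ i j) (by positivity)
            _ = (Δ : ℤ) * B := by ring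
        calc ∑ j ∈ S, ((B : ℤ) * max (A i j) 0 - (B : ℤ) * min (A i j) 0)
            ≤ ∑ _j ∈ S, ((Δ * B : ℕ) : ℤ) := Finset.sum_le_sum this
          _ = ((r + 1) * Δ * B : ℕ) := by
              rw [Finset.sum_const, hScard]; push_cast; ring
      omega
    have h1 : T.card ≤ ((r + 1) * Δ * B + 1) ^ r := by
      rw [hTdef, Fintype.card_piFinset]
      have : ∀ i : Fin m, ((if i ∈ R then Finset.Icc (L i) (U i) else ({0} : Finset ℤ)).card)
          = if i ∈ R then (Finset.Icc (L i) (U i)).card else 1 := by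
        intro i; split <;> simp
      rw [Finset.prod_congr rfl (fun i _ => this i), Finset.prod_ite_mem, Finset.univ_inter]
      calc ∏ i ∈ R, (Finset.Icc (L i) (U i)).card ≤ ∏ _i ∈ R, ((r + 1) * Δ * B + 1) :=
            Finset.prod_le_prod (fun _ _ => Nat.zero_le _) hstep
        _ = ((r + 1) * Δ * B + 1) ^ r := by rw [Finset.prod_const, ← hrdef]
    have h2 : ((r + 1) * Δ * B + 1) ^ r ≤ ((r + 1) * Δ * (B + 1)) ^ r := by
      apply Nat.pow_le_pow_left
      have : 1 ≤ (r + 1) * Δ := Nat.mul_pos (by omega) (by omega)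
      nlinarith
    have h3 : ((r + 1) * Δ * (B + 1)) ^ r = B * (B + 1) ^ r := by
      rw [mul_pow, ← hBdef]
    have h4 : B * (B + 1) ^ r < (B + 1) ^ (r + 1) := by
      rw [pow_succ, mul_comm]
      exact mul_lt_mul_of_pos_left (by omega) (by positivity)
    calc T.card ≤ ((r + 1) * Δ * B + 1) ^ r := h1
      _ ≤ ((r + 1) * Δ * (B + 1)) ^ r := h2
      _ = B * (B + 1) ^ r := h3
      _ < (B + 1) ^ (r + 1) := h4
      _ = D.card := hDcard.symm
  -- pigeonhole
  have hmaps : ∀ x ∈ D, (fun i => if i ∈ R then A.mulVec x i else 0) ∈ T := by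
    intro x hxD
    rw [hDdef, Fintype.mem_piFinset] at hxD
    have hxS : ∀ j ∈ S, 0 ≤ x j ∧ x j ≤ (B : ℤ) := by
      intro j hj
      have := hxD j
      rw [if_pos hj, Finset.mem_Icc] at this
      exact this
    have hxS' : ∀ j, j ∉ S → x j = 0 := by
      intro j hj
      have := hxD j
      rwa [if_neg hj, Finset.mem_singleton] at this
    rw [hTdef, Fintype.mem_piFinset]
    intro i
    by_cases hiR : i ∈ R
    · rw [if_pos hiR]
      simp only [if_pos hiR, Finset.mem_Icc]
      have hsum : A.mulVec x i = ∑ j ∈ S, A i j * x j := by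
        rw [Matrix.mulVec, dotProduct]
        rw [← Finset.sum_subset (Finset.subset_univ S)]
        intro j _ hj
        rw [hxS' j hj, mul_zero]
      constructor
      · rw [hsum, hLdef]
        apply Finset.sum_le_sum
        intro j hj
        obtain ⟨h0, hb⟩ := hxS j hj
        calc (B : ℤ) * min (A i j) 0 ≤ x j * min (A i j) 0 := by
              rcases le_or_gt (min (A i j) 0) 0 with h | h
              · exact mul_le_mul_of_nonpos_right hb h
              · omega
          _ ≤ x j * A i j := mul_le_mul_of_nonneg_left (min_le_left _ _) h0
          _ = A i j * x j := mul_comm _ _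
      · rw [hsum, hUdef]
        apply Finset.sum_le_sum
        intro j hj
        obtain ⟨h0, hb⟩ := hxS j hj
        calc A i j * x j ≤ max (A i j) 0 * x j :=
              mul_le_mul_of_nonneg_right (le_max_left _ _) h0
          _ ≤ max (A i j) 0 * B :=
              mul_le_mul_of_nonneg_left hb (le_max_right _ _)
          _ = (B : ℤ) * max (A i j) 0 := mul_comm _ _
    · rw [if_neg hiR]
      simp [hiR]
  obtain ⟨x, hxD, y, hyD, hxy, hfeq⟩ :=
    Finset.exists_ne_map_eq_of_card_lt_of_maps_to hTcard hmaps
  refine ⟨x - y, sub_ne_zero.mpr hxy, ?_, ?_⟩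
  · apply hkey
    intro i hiR
    have := congrFun hfeq i
    simp only [if_pos hiR] at this
    have hsub : A.mulVec (x - y) = A.mulVec x - A.mulVec y := A.mulVec_sub x y
    rw [hsub]
    simp [this]
  · intro j
    have hxDj := (Fintype.mem_piFinset.mp (hDdef ▸ hxD)) j
    have hyDj := (Fintype.mem_piFinset.mp (hDdef ▸ hyD)) j
    have hbound : |x j - y j| ≤ (B : ℤ) := by
      by_cases hj : j ∈ S
      · rw [if_pos hj, Finset.mem_Icc] at hxDj hyDj
        rw [abs_le]; omega
      · rw [if_neg hj, Finset.mem_singleton] at hxDj hyDj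
        rw [hxDj, hyDj]
        simp
    have hBle : (B : ℤ) ≤ ((m + 2) * (m * Δ) ^ m : ℕ) := by
      rw [hBdef]
      exact_mod_cast bound_aux r m Δ hΔ1 hRm
    calc |(x - y) j| = |x j - y j| := by simp
      _ ≤ (B : ℤ) := hbound
      _ ≤ _ := hBle
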